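/- Let X be a nonempty set, x₀ ∈ X, and β ∈ ℝ. Let F be a map from real-valued functions on X to real-valued functions on X that is translation invariant: F(f + c)(x) = F(f)(x) for every function f : X → ℝ, every constant c ∈ ℝ, and every x ∈ X. Let φ̄ : [0,∞) × X → ℝ be such that for each x the map t ↦ φ̄(t,x) is differentiable with ∂φ̄/∂t(t,x) = F(φ̄(t,·))(x) - β for all t ≥ 0, and t ↦ φ̄(t,x₀) is continuous. Define φ(t,x) = φ̄(t,x) - exp(-t)·∫₀ᵗ exp(s)·φ̄(s,x₀) ds + β·(1 - exp(-t)). Then: (i) φ(0,·) = φ̄(0,·); (ii) φ(t,x) - φ(t,x₀) = φ̄(t,x) - φ̄(t,x₀) for all t ≥ 0 and x ∈ X; and (iii) for each x the map t ↦ φ(t,x) is differentiable with ∂φ/∂t(t,x) = F(φ(t,·))(x) - φ(t,x₀). -/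

import Mathlib

/-- Abstract form of Lemma 3.3: if `F` is translation invariant and `φ̄` solves the
value-iteration equation `∂φ̄/∂t = F(φ̄(t,·)) - β`, then
`φ(t,x) = φ̄(t,x) - e^{-t} ∫₀ᵗ e^s φ̄(s,x₀) ds + β (1 - e^{-t})` satisfies
`φ(0,·) = φ̄(0,·)`, `φ(t,x) - φ(t,x₀) = φ̄(t,x) - φ̄(t,x₀)`, and the relative
value-iteration equation `∂φ/∂t = F(φ(t,·)) - φ(t,x₀)`. -/
theorem stmt_11 (X : Type*) [Nonempty X] (x₀ : X) (β : ℝ)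
    (F : (X → ℝ) → (X → ℝ))
    (hF : ∀ (f : X → ℝ) (c : ℝ) (x : X), F (fun y => f y + c) x = F f x)
    (φ' : ℝ → X → ℝ)
    (hderiv : ∀ x : X, ∀ t ∈ Set.Ici (0 : ℝ),
      HasDerivWithinAt (fun s => φ' s x) (F (φ' t) x - β) (Set.Ici 0) t)
    (hcont : ContinuousOn (fun t => φ' t x₀) (Set.Ici 0))
    (φ : ℝ → X → ℝ)
    (hφ : ∀ (t : ℝ) (x : X),
      φ t x = φ' t x - Real.exp (-t) * (∫ s in (0 : ℝ)..t, Real.exp s * φ' s x₀)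
        + β * (1 - Real.exp (-t))) :
    (∀ x : X, φ 0 x = φ' 0 x) ∧
    (∀ x : X, ∀ t ∈ Set.Ici (0 : ℝ), φ t x - φ t x₀ = φ' t x - φ' t x₀) ∧
    (∀ x : X, ∀ t ∈ Set.Ici (0 : ℝ),
      HasDerivWithinAt (fun s => φ s x) (F (φ t) x - φ t x₀) (Set.Ici 0) t) := by
  set g : ℝ → ℝ := fun s => Real.exp s * φ' s x₀ with hg
  set I : ℝ → ℝ := fun t => ∫ s in (0 : ℝ)..t, g s with hI
  have hgcont : ContinuousOn g (Set.Ici 0) :=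
    (Real.continuous_exp.continuousOn).mul hcont
  refine ⟨fun x => by simp [hφ], fun x t ht => by rw [hφ t x, hφ t x₀]; ring, ?_⟩
  intro x t ht
  have ht0 : (0 : ℝ) ≤ t := ht
  -- integrability of g on [0, t]
  have hint : IntervalIntegrable g MeasureTheory.volume 0 t :=
    (hgcont.mono (by rw [Set.uIcc_of_le ht0]; exact Set.Icc_subset_Ici_self)).intervalIntegrable
  -- derivative of I within Ici 0 at t
  have hIder : HasDerivWithinAt I (g t) (Set.Ici 0) t := by
    rcases eq_or_lt_of_le ht0 with h | h
    · subst h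
      have hmeas : StronglyMeasurableAtFilter g (nhdsWithin 0 (Set.Ioi 0)) :=
        ⟨Set.Ici 0, nhdsWithin_mono _ Set.Ioi_subset_Ici_self self_mem_nhdsWithin,
          hgcont.aestronglyMeasurable measurableSet_Ici⟩
      exact intervalIntegral.integral_hasDerivWithinAt_right hint hmeas
        ((hgcont 0 Set.self_mem_Ici).mono Set.Ioi_subset_Ici_self)
    · have hmem : Set.Ici (0 : ℝ) ∈ nhds t := Ici_mem_nhds h
      have hmeas : StronglyMeasurableAtFilter g (nhds t) :=
        ⟨Set.Ici 0, hmem, hgcont.aestronglyMeasurable measurableSet_Ici⟩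
      have hct : ContinuousAt g t :=
        (hgcont t ht0).continuousAt hmem
      exact (intervalIntegral.integral_hasDerivAt_right hint hmeas hct).hasDerivWithinAt
  -- derivative of exp (-s)
  have hexp : HasDerivWithinAt (fun s : ℝ => Real.exp (-s)) (-Real.exp (-t)) (Set.Ici 0) t := by
    have := ((Real.hasDerivAt_exp (-t)).comp t ((hasDerivAt_id t).neg))
    simpa [Function.comp_def] using this.hasDerivWithinAt
  -- assemble
  have hmain : HasDerivWithinAt (fun s => φ s x)
      ((F (φ' t) x - β) - ((-Real.exp (-t)) * I t + Real.exp (-t) * g t)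
        + β * (0 - (-Real.exp (-t)))) (Set.Ici 0) t := by
    have hfun : (fun s => φ s x)
        = fun s => φ' s x - Real.exp (-s) * I s + β * (1 - Real.exp (-s)) :=
      funext fun s => hφ s x
    rw [hfun]
    exact (((hderiv x t ht).sub (hexp.mul hIder)).add
      ((((hasDerivWithinAt_const t _ (1 : ℝ)).sub hexp)).const_mul β))
  have hφteq : φ t = fun y => φ' t y + (-(Real.exp (-t) * I t) + β * (1 - Real.exp (-t))) := by
    funext y; rw [hφ t y]; ring
  have hFeq : F (φ t) x = F (φ' t) x := by rw [hφteq]; exact hF _ _ x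
  have hexpg : Real.exp (-t) * g t = φ' t x₀ := by
    rw [← mul_assoc, ← Real.exp_add]; simp
  convert hmain using 1
  rw [hFeq, hφ t x₀, hexpg]
  ring
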